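/- The K-linear map ρ : 𝔤 → End_K(V) determined on matrix units by ρ(E_{ij})(δ_μ) = (μ(j) − 1)·δ_{μ+ε_i−ε_j} for i ≠ j and ρ(E_{kk})(δ_μ) = μ(k)·δ_μ is a homomorphism of Lie algebras, i.e. ρ([x,y]) = ρ(x)∘ρ(y) − ρ(y)∘ρ(x) for all x, y ∈ 𝔤 = gl_{d+1}(K). -/

import Mathlib

/-- The K-linear map ρ : 𝔤 → End_K(V) determined on matrix units by
ρ(E_{ij})(δ_μ) = (μ(j) − 1)·δ_{μ+ε_i−ε_j} for i ≠ j and ρ(E_{kk})(δ_μ) = μ(k)·δ_μ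
is a homomorphism of Lie algebras. -/
theorem stmt_5 (K : Type) [Field K] [CharZero K] (d : ℕ) (hd : 1 ≤ d)
    (ρ : Matrix (Fin (d+1)) (Fin (d+1)) K →ₗ[K]
        Module.End K ((Fin (d+1) → ℤ) →₀ K))
    (hρ₁ : ∀ (i j : Fin (d+1)), i ≠ j → ∀ μ : Fin (d+1) → ℤ,
      ρ (Matrix.single i j (1:K)) (Finsupp.single μ (1:K)) =
        (μ j - 1) • Finsupp.single (μ + Pi.single i 1 - Pi.single j 1) (1:K))
    (hρ₂ : ∀ (k : Fin (d+1)) (μ : Fin (d+1) → ℤ),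
      ρ (Matrix.single k k (1:K)) (Finsupp.single μ (1:K)) =
        μ k • Finsupp.single μ (1:K)) :
    ∀ x y : Matrix (Fin (d+1)) (Fin (d+1)) K,
      ρ ⁅x, y⁆ = ρ x * ρ y - ρ y * ρ x := by
  -- uniform formula for ρ on matrix units
  have hρ : ∀ (i j : Fin (d+1)) (μ : Fin (d+1) → ℤ),
      ρ (Matrix.single i j (1:K)) (Finsupp.single μ (1:K)) =
        (μ j - if i = j then 0 else 1) •
          Finsupp.single (μ + Pi.single i 1 - Pi.single j 1) (1:K) := by
    intro i j μ
    by_cases h : i = j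
    · subst h
      simp [hρ₂, add_sub_cancel_right]
    · simp [hρ₁ i j h μ, h]
  -- the key identity on matrix units
  have key : ∀ i j k l : Fin (d+1),
      ρ ⁅Matrix.single i j (1:K), Matrix.single k l (1:K)⁆ =
        ρ (Matrix.single i j (1:K)) * ρ (Matrix.single k l (1:K)) -
        ρ (Matrix.single k l (1:K)) * ρ (Matrix.single i j (1:K)) := by
    intro i j k l
    apply Module.Basis.ext Finsupp.basisSingleOne
    intro μ
    simp only [Finsupp.coe_basisSingleOne, LinearMap.sub_apply, Module.End.mul_apply,
      Ring.lie_def, map_sub]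
    have hidx : μ + Pi.single k 1 - Pi.single l 1 + Pi.single i 1 - Pi.single j 1 =
        μ + Pi.single i 1 - Pi.single j 1 + Pi.single k 1 - Pi.single l 1 := by
      funext t; simp only [Pi.add_apply, Pi.sub_apply]; ring
    have hR : ρ (Matrix.single i j (1:K)) (ρ (Matrix.single k l (1:K))
          (Finsupp.single μ (1:K))) -
        ρ (Matrix.single k l (1:K)) (ρ (Matrix.single i j (1:K))
          (Finsupp.single μ (1:K))) =
        ((μ l - if k = l then 0 else 1) *
            ((μ + Pi.single k 1 - Pi.single l 1 : Fin (d+1) → ℤ) j - if i = j then 0 else 1) -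
          (μ j - if i = j then 0 else 1) *
            ((μ + Pi.single i 1 - Pi.single j 1 : Fin (d+1) → ℤ) l -
              if k = l then 0 else 1)) •
          Finsupp.single (μ + Pi.single i 1 - Pi.single j 1 + Pi.single k 1 - Pi.single l 1)
            (1:K) := by
      rw [hρ k l μ, hρ i j μ, map_zsmul, map_zsmul, hρ, hρ, smul_smul, smul_smul, hidx,
        sub_smul]
    rw [hR]
    rcases eq_or_ne j k with hjk | hjk
    · subst hjk
      rcases eq_or_ne l i with hli | hli
      · subst hli
        rw [Matrix.single_mul_single_same, Matrix.single_mul_single_same, one_mul,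
          hρ, hρ]
        have h1 : μ + Pi.single l 1 - Pi.single l 1 = μ := by
          funext t; simp only [Pi.add_apply, Pi.sub_apply]; ring
        have h2 : μ + Pi.single j 1 - Pi.single j 1 = μ := by
          funext t; simp only [Pi.add_apply, Pi.sub_apply]; ring
        have h3 : μ + Pi.single l 1 - Pi.single j 1 + Pi.single j 1 - Pi.single l 1 = μ := by
          funext t; simp only [Pi.add_apply, Pi.sub_apply]; ring
        rw [h1, h2, h3, ← sub_smul]
        congr 1
        simp only [Pi.add_apply, Pi.sub_apply, Pi.single_apply]
        split_ifs <;> subst_vars <;> first | ring1 | exact absurd rfl (by assumption)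
      · rw [Matrix.single_mul_single_same, one_mul,
          Matrix.single_mul_single_of_ne (i := j) (j := l) (c := (1:K)) (h := hli) (d := 1), map_zero, LinearMap.zero_apply, sub_zero,
          hρ]
        have h3 : μ + Pi.single i 1 - Pi.single j 1 + Pi.single j 1 - Pi.single l 1 =
            μ + Pi.single i 1 - Pi.single l 1 := by
          funext t; simp only [Pi.add_apply, Pi.sub_apply]; ring
        rw [h3]
        congr 1
        simp only [Pi.add_apply, Pi.sub_apply, Pi.single_apply]
        split_ifs <;> subst_vars <;> first | ring1 | exact absurd rfl (by assumption)
    · rcases eq_or_ne l i with hli | hli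
      · subst hli
        rw [Matrix.single_mul_single_of_ne (i := l) (j := j) (c := (1:K)) (h := hjk) (d := 1), map_zero, LinearMap.zero_apply, zero_sub,
          Matrix.single_mul_single_same, one_mul, hρ]
        have h3 : μ + Pi.single l 1 - Pi.single j 1 + Pi.single k 1 - Pi.single l 1 =
            μ + Pi.single k 1 - Pi.single j 1 := by
          funext t; simp only [Pi.add_apply, Pi.sub_apply]; ring
        rw [← neg_smul, eq_comm, show (μ + Pi.single k 1 - Pi.single j 1 : Fin (d+1) → ℤ) =
          μ + Pi.single l 1 - Pi.single j 1 + Pi.single k 1 - Pi.single l 1 from h3.symm]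
        congr 1
        simp only [Pi.add_apply, Pi.sub_apply, Pi.single_apply]
        split_ifs <;> subst_vars <;> first | ring1 | exact absurd rfl (by assumption)
      · rw [Matrix.single_mul_single_of_ne (i := i) (j := j) (c := (1:K)) (h := hjk) (d := 1), Matrix.single_mul_single_of_ne (i := k) (j := l) (c := (1:K)) (h := hli) (d := 1),
          map_zero, LinearMap.zero_apply, sub_zero, eq_comm]
        have hc : ((μ l - if k = l then 0 else 1) *
            ((μ + Pi.single k 1 - Pi.single l 1 : Fin (d+1) → ℤ) j - if i = j then 0 else 1) -
          (μ j - if i = j then 0 else 1) *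
            ((μ + Pi.single i 1 - Pi.single j 1 : Fin (d+1) → ℤ) l -
              if k = l then 0 else 1)) = 0 := by
          simp only [Pi.add_apply, Pi.sub_apply, Pi.single_apply]
          split_ifs <;> subst_vars <;> first | ring1 | exact absurd rfl (by assumption)
        rw [hc, zero_smul]
  -- extend by bilinearity using the standard basis of matrices
  intro x y
  let F : Matrix (Fin (d+1)) (Fin (d+1)) K →ₗ[K]
      Matrix (Fin (d+1)) (Fin (d+1)) K →ₗ[K]
      Module.End K ((Fin (d+1) → ℤ) →₀ K) :=
    LinearMap.mk₂ K (fun a b => ρ ⁅a, b⁆)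
      (fun a a' b => by simp only [Ring.lie_def, add_mul, mul_add, map_add, map_sub]; abel)
      (fun c a b => by simp only [Ring.lie_def, smul_mul_assoc, mul_smul_comm, ← smul_sub, map_smul])
      (fun a b b' => by simp only [Ring.lie_def, add_mul, mul_add, map_add, map_sub]; abel)
      (fun c a b => by simp only [Ring.lie_def, smul_mul_assoc, mul_smul_comm, ← smul_sub, map_smul])
  let G : Matrix (Fin (d+1)) (Fin (d+1)) K →ₗ[K]
      Matrix (Fin (d+1)) (Fin (d+1)) K →ₗ[K]
      Module.End K ((Fin (d+1) → ℤ) →₀ K) :=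
    LinearMap.mk₂ K (fun a b => ρ a * ρ b - ρ b * ρ a)
      (fun a a' b => by simp only [map_add, add_mul, mul_add]; abel)
      (fun c a b => by simp only [map_smul, smul_mul_assoc, mul_smul_comm]; exact (smul_sub c (ρ a * ρ b) (ρ b * ρ a)).symm)
      (fun a b b' => by simp only [map_add, add_mul, mul_add]; abel)
      (fun c a b => by simp only [map_smul, smul_mul_assoc, mul_smul_comm]; exact (smul_sub c (ρ a * ρ b) (ρ b * ρ a)).symm)
  have hFG : F = G := by
    apply Module.Basis.ext (Matrix.stdBasis K (Fin (d+1)) (Fin (d+1)))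
    intro p
    apply Module.Basis.ext (Matrix.stdBasis K (Fin (d+1)) (Fin (d+1)))
    intro q
    rw [Matrix.stdBasis_eq_single, Matrix.stdBasis_eq_single]
    exact key p.1 p.2 q.1 q.2
  exact DFunLike.congr_fun (DFunLike.congr_fun hFG x) y
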